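/- Let f : S -> R be differentiable with L-smoothness quadratic bound f(Y) <= f(X) + <grad f(X), Y - X> + (L/2)||X - Y||^2 for all X, Y. Consider the update X^{k+1} = X^k - gamma * G^sharp where gamma > 0 and G^sharp satisfies <G, G^sharp> = ||G^sharp||^2 and ||G^sharp|| = ||G||_*. Then f(X^{k+1}) <= f(X^k) + (3 gamma / 2) ||grad f(X^k) - G||_*^2 - (gamma / 4) ||grad f(X^k)||_*^2 - (1/(4 gamma) - L/2) gamma^2 ||G||_*^2. -/

import Mathlib

open scoped RealInnerProductSpace

theorem stmt_16 {S : Type*} [NormedAddCommGroup S] [InnerProductSpace ℝ S]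
    [FiniteDimensional ℝ S] [CompleteSpace S]
    (N : S → ℝ)
    (hN_add : ∀ x y, N (x + y) ≤ N x + N y)
    (hN_smul : ∀ (c : ℝ) x, N (c • x) = |c| * N x)
    (hN_zero : ∀ x, N x = 0 ↔ x = 0)
    (Nd : S → ℝ)
    (hNd : ∀ X, Nd X = sSup ((fun Z => ⟪X, Z⟫) '' {Z | N Z ≤ 1}))
    (f : S → ℝ) (hf : Differentiable ℝ f)
    (L : ℝ) (hL : 0 < L)
    (hquad : ∀ X Y, f Y ≤ f X + ⟪gradient f X, Y - X⟫ + L / 2 * (N (X - Y)) ^ 2)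
    (G Gs : S)
    (hsharp_inner : ⟪G, Gs⟫ = (N Gs) ^ 2)
    (hsharp_norm : N Gs = Nd G)
    (γ : ℝ) (hγ : 0 < γ)
    (X0 X1 : S) (hX1 : X1 = X0 - γ • Gs) :
    f X1 ≤ f X0 + 3 * γ / 2 * (Nd (gradient f X0 - G)) ^ 2 -
      γ / 4 * (Nd (gradient f X0)) ^ 2 - (1 / (4 * γ) - L / 2) * γ ^ 2 * (Nd G) ^ 2 := by
  -- basic facts about N
  have hN0 : N 0 = 0 := (hN_zero 0).2 rfl
  have hNneg : ∀ x, 0 ≤ N x := by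
    intro x
    have h := hN_add x (-x)
    have : N (-x) = N x := by simpa using hN_smul (-1) x
    simp [hN0, this] at h
    linarith
  -- N is convex
  have hconv : ConvexOn ℝ Set.univ N := by
    refine ⟨convex_univ, ?_⟩
    intro x _ y _ a b ha hb _
    calc N (a • x + b • y) ≤ N (a • x) + N (b • y) := hN_add _ _
    _ = a * N x + b * N y := by rw [hN_smul, hN_smul, abs_of_nonneg ha, abs_of_nonneg hb]
  have hNcont : Continuous N := hconv.locallyLipschitz.continuous
  -- lower bound: ∃ m > 0, ∀ z, m * ‖z‖ ≤ N z
  obtain ⟨m, hm, hmle⟩ : ∃ m > 0, ∀ z : S, m * ‖z‖ ≤ N z := by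
    by_cases htriv : ∀ z : S, z = 0
    · exact ⟨1, one_pos, fun z => by simp [htriv z, hN0]⟩
    push_neg at htriv
    obtain ⟨z₀, hz₀⟩ := htriv
    have hsph : IsCompact (Metric.sphere (0 : S) 1) := isCompact_sphere 0 1
    have hne : (Metric.sphere (0 : S) 1).Nonempty := by
      refine ⟨‖z₀‖⁻¹ • z₀, ?_⟩
      simp [norm_smul, abs_of_nonneg (inv_nonneg.2 (norm_nonneg z₀)),
        inv_mul_cancel₀ (norm_ne_zero_iff.2 hz₀)]
    obtain ⟨w, hw, hwmin⟩ := hsph.exists_isMinOn hne hNcont.continuousOn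
    have hw0 : w ≠ 0 := by
      intro h
      rw [h] at hw
      simp at hw
    have hNw : 0 < N w := lt_of_le_of_ne (hNneg w) (fun h => hw0 ((hN_zero w).1 h.symm))
    refine ⟨N w, hNw, fun z => ?_⟩
    rcases eq_or_ne z 0 with rfl | hz
    · simp [hN0]
    have hnz : (0:ℝ) < ‖z‖ := norm_pos_iff.2 hz
    have hmem : ‖z‖⁻¹ • z ∈ Metric.sphere (0 : S) 1 := by
      simp [norm_smul, abs_of_nonneg (inv_nonneg.2 (norm_nonneg z)), inv_mul_cancel₀ hnz.ne']
    have h5 := hwmin hmem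
    simp only [Set.mem_setOf_eq] at h5
    have h2 : N (‖z‖⁻¹ • z) = ‖z‖⁻¹ * N z := by
      rw [hN_smul]; rw [abs_of_nonneg (inv_nonneg.2 (norm_nonneg z))]
    rw [h2] at h5
    have this := h5
    calc N w * ‖z‖ ≤ (‖z‖⁻¹ * N z) * ‖z‖ := by nlinarith
    _ = N z := by field_simp
  -- bddAbove and nonempty of the dual set
  have hball : ∀ X : S, BddAbove ((fun Z => ⟪X, Z⟫) '' {Z | N Z ≤ 1}) := by
    intro X
    refine ⟨‖X‖ * m⁻¹, ?_⟩
    rintro y ⟨Z, hZ, rfl⟩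
    have h1 : ⟪X, Z⟫ ≤ ‖X‖ * ‖Z‖ := real_inner_le_norm X Z
    have h2 : m * ‖Z‖ ≤ N Z := hmle Z
    have h3 : N Z ≤ 1 := hZ
    have h4 : ‖Z‖ ≤ m⁻¹ := by
      rw [← mul_le_mul_iff_right₀ hm, mul_inv_cancel₀ hm.ne']
      linarith
    calc ⟪X, Z⟫ ≤ ‖X‖ * ‖Z‖ := h1
    _ ≤ ‖X‖ * m⁻¹ := by nlinarith [norm_nonneg X]
  have hmem0 : ∀ X : S, (0:ℝ) ∈ (fun Z => ⟪X, Z⟫) '' {Z | N Z ≤ 1} := by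
    intro X
    exact ⟨0, by simp [hN0], by simp⟩
  have hNdnn : ∀ X : S, 0 ≤ Nd X := by
    intro X
    rw [hNd]
    exact le_csSup (hball X) (hmem0 X)
  -- duality: ⟪X, Z⟫ ≤ Nd X * N Z
  have hdual : ∀ X Z : S, ⟪X, Z⟫ ≤ Nd X * N Z := by
    intro X Z
    rcases eq_or_ne Z 0 with rfl | hz
    · simp [hN0]
    have hNZ : 0 < N Z := lt_of_le_of_ne (hNneg Z) (fun h => hz ((hN_zero Z).1 h.symm))
    have hmem : ⟪X, (N Z)⁻¹ • Z⟫ ∈ (fun Z => ⟪X, Z⟫) '' {Z | N Z ≤ 1} := by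
      refine ⟨(N Z)⁻¹ • Z, ?_, rfl⟩
      simp only [Set.mem_setOf_eq, hN_smul, abs_of_nonneg (inv_nonneg.2 hNZ.le)]
      rw [inv_mul_cancel₀ hNZ.ne']
    have h := le_csSup (hball X) hmem
    rw [← hNd] at h
    rw [real_inner_smul_right] at h
    calc ⟪X, Z⟫ = N Z * ((N Z)⁻¹ * ⟪X, Z⟫) := by field_simp
    _ ≤ N Z * Nd X := by nlinarith
    _ = Nd X * N Z := mul_comm _ _
  -- Nd subadditive
  have hNd_add : ∀ x y : S, Nd (x + y) ≤ Nd x + Nd y := by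
    intro x y
    rw [hNd]
    apply csSup_le ⟨0, hmem0 _⟩
    rintro b ⟨Z, hZ, rfl⟩
    have h1 : ⟪x, Z⟫ ≤ Nd x * N Z := hdual x Z
    have h2 : ⟪y, Z⟫ ≤ Nd y * N Z := hdual y Z
    have h3 : N Z ≤ 1 := hZ
    simp only [inner_add_left]
    nlinarith [hNdnn x, hNdnn y, hNneg Z]
  -- main computation
  set g := gradient f X0 with hg
  have key := hquad X0 X1
  have hd1 : X1 - X0 = -(γ • Gs) := by rw [hX1]; abel
  have hd2 : X0 - X1 = γ • Gs := by rw [hX1]; abel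
  have hNγ : N (γ • Gs) = γ * N Gs := by rw [hN_smul, abs_of_pos hγ]
  have hinner : ⟪g, X1 - X0⟫ = -(γ * ⟪g, Gs⟫) := by
    rw [hd1, inner_neg_right, real_inner_smul_right]
  -- ⟪g, Gs⟫ = N Gs ^ 2 + ⟪g - G, Gs⟫
  have hsplit : ⟪g, Gs⟫ = (N Gs)^2 + ⟪g - G, Gs⟫ := by
    rw [inner_sub_left, ← hsharp_inner]; ring
  have hlow : -(Nd (g - G) * N Gs) ≤ ⟪g - G, Gs⟫ := by
    have := hdual (g - G) (-Gs)
    have hn : N (-Gs) = N Gs := by simpa using hN_smul (-1) Gs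
    rw [inner_neg_right, hn] at this
    linarith
  -- triangle: Nd g ≤ Nd (g - G) + Nd G
  have htri : Nd g ≤ Nd (g - G) + Nd G := by
    have := hNd_add (g - G) G
    simpa using this
  set d := Nd (g - G) with hdd
  set a := Nd G with ha
  set n := Nd g with hn
  have hNGs : N Gs = a := hsharp_norm
  rw [hd2, hNγ, hinner, hsplit, hNGs] at key
  have hda : 0 ≤ d := hNdnn _
  have haa : 0 ≤ a := hNdnn _
  have hnn : 0 ≤ n := hNdnn _
  have hn2 : n^2 ≤ (d + a)^2 := by nlinarith
  have hlow' : -(d * a) ≤ ⟪g - G, Gs⟫ := by rw [hNGs] at hlow; exact hlow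
  have heq : (1 / (4 * γ) - L / 2) * γ ^ 2 = γ / 4 - L / 2 * γ ^ 2 := by
    field_simp
  have h5 : γ * (-(d * a)) ≤ γ * ⟪g - G, Gs⟫ := mul_le_mul_of_nonneg_left hlow' hγ.le
  rw [heq]
  nlinarith [mul_le_mul_of_nonneg_left hn2 hγ.le,
    mul_nonneg hγ.le (sq_nonneg (5*d - 3*a)), mul_nonneg hγ.le (sq_nonneg a)]
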